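/- arXiv:1502.00541 — 2 statements merged into one kernel-verified Lean document; each statement's English description precedes it below -/
import Mathlib

section
/- Let ω be a unit in Z₂[i] (the ring of integers of Q₂(i)) and let m = 1 + i, 𝔪 = (m). Then ω is a square in Q₂(i) if and only if ω ≡ ±1 (mod 𝔪⁵). -/
open Polynomial

lemma two_prime : Prime (2 : ℤ_[2]) := by
  have := PadicInt.prime_p (p := 2)
  simpa using this

lemma norm_8 : ‖(8:ℤ_[2])‖ = (2:ℝ)^(-3:ℤ) := by
  have : (8:ℤ_[2]) = (2:ℤ_[2])^3 := by norm_num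
  rw [this]
  have := PadicInt.norm_p_pow (p := 2) 3
  simpa using this

lemma norm_le_of_dvd8 {x : ℤ_[2]} (h : (8:ℤ_[2]) ∣ x) : ‖x‖ ≤ (2:ℝ)^(-3:ℤ) := by
  have : ‖x‖ ≤ ((2:ℕ):ℝ)^(-(3:ℕ):ℤ) := by
    rw [PadicInt.norm_le_pow_iff_mem_span_pow]
    rw [Ideal.mem_span_singleton]
    have e : ((2:ℕ):ℤ_[2])^3 = (8:ℤ_[2]) := by norm_num
    rw [e]
    exact h
  simpa using this

lemma Z2_sq {u : ℤ_[2]} (h : (8:ℤ_[2]) ∣ u - 1) : ∃ s : ℤ_[2], s^2 = u := by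
  set F : Polynomial ℤ_[2] := X^2 - C u with hF
  have heval : F.eval 1 = 1 - u := by simp [hF]
  have hder : F.derivative.eval 1 = 2 := by simp [hF]; norm_num
  have hnorm : ‖F.eval 1‖ < ‖F.derivative.eval 1‖ ^ 2 := by
    rw [heval, hder]
    have h1 : ‖(1:ℤ_[2]) - u‖ ≤ (2:ℝ)^(-3:ℤ) := by
      apply norm_le_of_dvd8
      have : (8:ℤ_[2]) ∣ -(u-1) := dvd_neg.2 h
      simpa [neg_sub] using this
    have h2 : ‖(2:ℤ_[2])‖ = (2:ℝ)⁻¹ := by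
      have := PadicInt.norm_p (p := 2); simpa using this
    rw [h2]
    calc ‖(1:ℤ_[2]) - u‖ ≤ (2:ℝ)^(-3:ℤ) := h1
      _ < (2:ℝ)⁻¹ ^ 2 := by norm_num
  obtain ⟨z, hz, -⟩ := hensels_lemma hnorm
  refine ⟨z, ?_⟩
  have := hz
  simp [hF, sub_eq_zero] at this
  exact this

lemma par (x : ℤ_[2]) : (2:ℤ_[2]) ∣ x ∨ (2:ℤ_[2]) ∣ x - 1 := by
  have hs := PadicInt.toZMod_spec x
  rw [PadicInt.maximalIdeal_eq_span_p, Ideal.mem_span_singleton] at hs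
  have h01 : ∀ z : ZMod 2, z = 0 ∨ z = 1 := by decide
  rcases h01 (PadicInt.toZMod x) with h | h <;> rw [h] at hs
  · left; simpa using hs
  · right; simpa [ZMod.cast_eq_val, show (1 : ZMod 2).val = 1 from rfl, Nat.cast_one] using hs

lemma odd_of_isUnit {x : ℤ_[2]} (h : IsUnit x) : ¬ (2:ℤ_[2]) ∣ x := by
  intro hd
  exact two_prime.not_unit (isUnit_of_dvd_unit hd h)

lemma isUnit_of_odd {x : ℤ_[2]} (h : ¬ (2:ℤ_[2]) ∣ x) : IsUnit x := by
  rw [PadicInt.isUnit_iff]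
  refine le_antisymm (PadicInt.norm_le_one x) ?_
  by_contra hlt
  push_neg at hlt
  exact h ((PadicInt.norm_lt_one_iff_dvd x).1 (by simpa using hlt))

lemma even_mul_succ (k : ℤ_[2]) : (2:ℤ_[2]) ∣ k * (k + 1) := by
  rcases par k with ⟨j, hj⟩ | ⟨j, hj⟩
  · exact ⟨j * (k+1), by rw [hj]; ring⟩
  · have hk : k = 1 + 2*j := by linear_combination hj
    exact ⟨k * (1 + j), by rw [hk]; ring⟩

lemma odd_sq {x : ℤ_[2]} (h : (2:ℤ_[2]) ∣ x - 1) : (8:ℤ_[2]) ∣ x^2 - 1 := by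
  obtain ⟨k, hk⟩ := h
  obtain ⟨j, hj⟩ := even_mul_succ k
  have hx : x = 1 + 2*k := by linear_combination hk
  exact ⟨j, by rw [hx]; linear_combination (4:ℤ_[2]) * hj⟩

/-- A model of `ℤ₂[i]`, the ring of integers of `ℚ₂(i)`. -/
noncomputable abbrev Z2i : Type := AdjoinRoot (X ^ 2 + 1 : Polynomial ℤ_[2])

/-- The element `i` of `ℤ₂[i]`. -/
noncomputable abbrev Z2i.i : Z2i := AdjoinRoot.root _

/-- The maximal ideal `𝔪 = (1 + i)` of `ℤ₂[i]`. -/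
noncomputable abbrev Z2i.m : Ideal Z2i := Ideal.span {1 + Z2i.i}

noncomputable def co : ℤ_[2] →+* Z2i := AdjoinRoot.of _

lemma f_monic : (X ^ 2 + 1 : Polynomial ℤ_[2]).Monic := by
  apply Polynomial.monic_X_pow_add
  simpa using Polynomial.degree_one_le.trans (by norm_num)

lemma f_deg : (X ^ 2 + 1 : Polynomial ℤ_[2]).degree = 2 := by
  compute_degree!

lemma i_sq : Z2i.i ^ 2 = -1 := by
  have h := AdjoinRoot.eval₂_root (X ^ 2 + 1 : Polynomial ℤ_[2])
  simp only [Polynomial.eval₂_add, Polynomial.eval₂_pow, Polynomial.eval₂_X,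
    Polynomial.eval₂_one] at h
  linear_combination h

lemma degle {d : WithBot ℕ} (h : d < 2) : d ≤ 1 := by
  by_contra hc
  push_neg at hc
  have h2 := Nat.WithBot.add_one_le_of_lt hc
  have h3 : (1 + 1 : WithBot ℕ) = 2 := by norm_num
  rw [h3] at h2
  exact absurd h (not_lt.2 h2)

lemma repr_exists (z : Z2i) : ∃ a b : ℤ_[2], z = co a + co b * Z2i.i := by
  induction z using AdjoinRoot.induction_on with
  | ih g =>
    refine ⟨(g %ₘ (X^2+1)).coeff 0, (g %ₘ (X^2+1)).coeff 1, ?_⟩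
    have hdeg : (g %ₘ (X^2+1)).degree ≤ 1 :=
      degle (f_deg ▸ Polynomial.degree_modByMonic_lt g f_monic)
    have hmk : AdjoinRoot.mk (X^2+1 : Polynomial ℤ_[2]) g
        = AdjoinRoot.mk (X^2+1 : Polynomial ℤ_[2]) (g %ₘ (X^2+1)) := by
      have hd : g - g %ₘ (X^2+1) = (X^2+1) * (g /ₘ (X^2+1)) := by
        have := Polynomial.modByMonic_add_div g (X^2+1)
        linear_combination -this
      rw [← sub_eq_zero, ← map_sub, AdjoinRoot.mk_eq_zero, hd]
      exact Dvd.intro _ rfl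
    rw [hmk]
    conv_lhs => rw [Polynomial.eq_X_add_C_of_degree_le_one hdeg]
    rw [map_add, map_mul, AdjoinRoot.mk_C, AdjoinRoot.mk_C, AdjoinRoot.mk_X]
    unfold co
    rw [AdjoinRoot.of]
    ring

lemma repr_unique {a b : ℤ_[2]} (h : co a + co b * Z2i.i = 0) : a = 0 ∧ b = 0 := by
  have hmk : AdjoinRoot.mk (X^2+1 : Polynomial ℤ_[2]) (C a + C b * X) = 0 := by
    rw [map_add, map_mul, AdjoinRoot.mk_C, AdjoinRoot.mk_C, AdjoinRoot.mk_X]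
    exact h
  rw [AdjoinRoot.mk_eq_zero] at hmk
  have h0 : (C a + C b * X : Polynomial ℤ_[2]) = 0 := by
    apply Polynomial.eq_zero_of_dvd_of_degree_lt hmk
    rw [f_deg]
    have : (C a + C b * X : Polynomial ℤ_[2]) = C b * X + C a := by ring
    rw [this]
    exact Polynomial.degree_linear_lt
  constructor
  · have := congrArg (fun p => Polynomial.coeff p 0) h0
    simpa using this
  · have := congrArg (fun p => Polynomial.coeff p 1) h0
    simpa using this

lemma mul_rule (a b c d : ℤ_[2]) :
    (co a + co b * Z2i.i) * (co c + co d * Z2i.i)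
      = co (a*c - b*d) + co (a*d + b*c) * Z2i.i := by
  have h := i_sq
  simp only [map_sub, map_add, map_mul]
  ring_nf
  linear_combination (co b * co d) * h

lemma repr_inj {a b c d : ℤ_[2]} (h : co a + co b * Z2i.i = co c + co d * Z2i.i) :
    a = c ∧ b = d := by
  have h0 : co (a - c) + co (b - d) * Z2i.i = 0 := by
    simp only [map_sub]
    linear_combination h
  obtain ⟨h1, h2⟩ := repr_unique h0
  exact ⟨sub_eq_zero.mp h1, sub_eq_zero.mp h2⟩

lemma mem_m5_iff (a b : ℤ_[2]) :
    (co a + co b * Z2i.i) ∈ Z2i.m ^ 5 ↔ ((8:ℤ_[2]) ∣ a + b ∧ (8:ℤ_[2]) ∣ a - b) := by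
  have hm5 : (1 + Z2i.i)^5 = co (-4) + co (-4) * Z2i.i := by
    have h := i_sq
    simp only [map_neg, map_ofNat]
    linear_combination (Z2i.i^3 + 5*Z2i.i^2 + 9*Z2i.i + 5) * h
  have hmem : (co a + co b * Z2i.i) ∈ Z2i.m ^ 5 ↔
      (1 + Z2i.i)^5 ∣ (co a + co b * Z2i.i) := by
    rw [Z2i.m, Ideal.span_singleton_pow, Ideal.mem_span_singleton]
  rw [hmem, hm5]
  constructor
  · rintro ⟨w, hw⟩
    obtain ⟨x, y, rfl⟩ := repr_exists w
    rw [mul_rule] at hw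
    obtain ⟨h1, h2⟩ := repr_inj hw
    constructor
    · exact ⟨-x, by rw [h1, h2]; ring⟩
    · exact ⟨y, by rw [h1, h2]; ring⟩
  · rintro ⟨⟨x, hx⟩, ⟨y, hy⟩⟩
    have h2 : (2:ℤ_[2]) ≠ 0 := by
      intro h
      exact two_prime.ne_zero h
    have ha : a = 4*x + 4*y := by
      apply mul_left_cancel₀ h2
      linear_combination hx + hy
    have hb : b = 4*x - 4*y := by
      apply mul_left_cancel₀ h2
      linear_combination hx - hy
    refine ⟨co (-x) + co y * Z2i.i, ?_⟩
    rw [mul_rule]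
    congr 1
    · congr 1; rw [ha]; ring
    · congr 2; rw [hb]; ring

lemma sq_exists {a b : ℤ_[2]} (h1 : (8:ℤ_[2]) ∣ a - 1 + b) (h2 : (8:ℤ_[2]) ∣ a - 1 - b) :
    ∃ z : Z2i, z^2 = co a + co b * Z2i.i := by
  have h2ne : (2:ℤ_[2]) ≠ 0 := two_prime.ne_zero
  have h8ne : (8:ℤ_[2]) ≠ 0 := by
    intro h
    exact h2ne (by apply pow_eq_zero_iff (n := 3) (by norm_num) |>.1; rw [show (2:ℤ_[2])^3 = 8 by norm_num, h])
  obtain ⟨x, hx⟩ := h1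
  obtain ⟨y, hy⟩ := h2
  set α := x + y with hα
  set β := x - y with hβ
  have ha : a = 1 + 4*α := by
    apply mul_left_cancel₀ h2ne
    rw [hα]; linear_combination hx + hy
  have hb : b = 4*β := by
    apply mul_left_cancel₀ h2ne
    rw [hβ]; linear_combination hx - hy
  have hab2 : α + β = 2*x := by rw [hα, hβ]; ring
  -- square root s of a² + b²
  have hu : (8:ℤ_[2]) ∣ a^2 + b^2 - 1 :=
    ⟨α + 2*α^2 + 2*β^2, by linear_combination (a+1+4*α)*ha + (b+4*β)*hb⟩
  obtain ⟨s, hs⟩ := Z2_sq (by simpa using hu)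
  have hsodd : (2:ℤ_[2]) ∣ s - 1 := by
    rcases par s with ⟨k, hk⟩ | h
    · exfalso
      obtain ⟨w, hw⟩ := hu
      apply two_prime.not_isUnit
      refine IsUnit.of_mul_eq_one (2*k^2 - 4*w) ?_
      linear_combination hs + hw - (s+2*k)*hk
    · exact h
  obtain ⟨t, γ, ht2, htγ⟩ : ∃ t γ : ℤ_[2], t^2 = a^2 + b^2 ∧ t = 1 + 4*γ := by
    obtain ⟨σ, hσ⟩ := hsodd
    rcases par σ with ⟨g0, hg0⟩ | ⟨j, hj⟩
    · exact ⟨s, g0, hs, by linear_combination hσ + 2*hg0⟩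
    · exact ⟨-s, -(1+j), by linear_combination hs, by linear_combination -hσ - 2*hj⟩
  have hrel : γ + 2*γ^2 = α + 2*α^2 + 2*β^2 := by
    apply mul_left_cancel₀ h8ne
    linear_combination ht2 - (t+1+4*γ)*htγ + (a+1+4*α)*ha + (b+4*β)*hb
  obtain ⟨p, hp⟩ := even_mul_succ α
  have e2 : β - γ = 2*(x - α - (α^2+β^2-γ^2)) := by linear_combination hab2 - hrel
  set q := x - α - (α^2+β^2-γ^2) with hq
  have hc0 : (8:ℤ_[2]) ∣ (1 + 2*(α+γ)) - 1 :=
    ⟨p + q*(β+γ), by linear_combination 2*hrel + 4*hp + (4*(β+γ))*e2⟩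
  obtain ⟨c, hc⟩ := Z2_sq hc0
  have hcodd : ¬ (2:ℤ_[2]) ∣ c := by
    rintro ⟨k, hk⟩
    obtain ⟨w, hw⟩ := hc0
    apply two_prime.not_isUnit
    refine IsUnit.of_mul_eq_one (2*k^2 - 4*w) ?_
    linear_combination hc + hw - (c+2*k)*hk
  obtain ⟨c', hc'⟩ := (isUnit_of_odd hcodd).exists_right_inv
  set d := 2*β*c' with hd
  have hcne : c ≠ 0 := by
    intro h0
    rw [h0, zero_mul] at hc'
    exact one_ne_zero hc'.symm
  have k2 : 2*c^2 = a + t := by rw [hc, ha, htγ]; ring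
  have k1 : c^2 * (2*β*c')^2 = 4*β^2 := by linear_combination (4*β^2*(c*c'+1))*hc'
  have key : c*c - d*d = a := by
    have h4c : (4:ℤ_[2])*c^2 ≠ 0 := by
      apply mul_ne_zero _ (pow_ne_zero _ hcne)
      intro h; apply h2ne
      apply pow_eq_zero_iff (n := 2) (by norm_num) |>.1
      rw [show (2:ℤ_[2])^2 = 4 by norm_num, h]
    apply mul_left_cancel₀ h4c
    rw [hd]
    linear_combination (2*c^2 - a + t)*k2 + ht2 + (b+4*β)*hb - 4*k1
  have key2 : c*d + d*c = b := by
    rw [hd, hb]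
    linear_combination (4*β)*hc'
  refine ⟨co c + co d * Z2i.i, ?_⟩
  rw [pow_two, mul_rule, key, key2]


lemma num_ne_zero : (2:ℤ_[2]) ≠ 0 ∧ (4:ℤ_[2]) ≠ 0 ∧ (8:ℤ_[2]) ≠ 0 := by
  refine ⟨two_prime.ne_zero, ?_, ?_⟩
  · intro h
    have : (2:ℤ_[2])^2 = 0 := by rw [show (2:ℤ_[2])^2 = 4 by norm_num, h]
    exact two_prime.ne_zero (pow_eq_zero_iff (by norm_num) |>.1 this)
  · intro h
    have : (2:ℤ_[2])^3 = 0 := by rw [show (2:ℤ_[2])^3 = 8 by norm_num, h]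
    exact two_prime.ne_zero (pow_eq_zero_iff (by norm_num) |>.1 this)

lemma odd_even_sq {c d : ℤ_[2]} (hc : (2:ℤ_[2]) ∣ c - 1) (hd : (2:ℤ_[2]) ∣ d) :
    (8:ℤ_[2]) ∣ (c^2 - d^2) - 1 + 2*c*d ∧ (8:ℤ_[2]) ∣ (c^2 - d^2) - 1 - 2*c*d := by
  obtain ⟨e, he⟩ := hd
  constructor
  · obtain ⟨w, hw⟩ := odd_sq (show (2:ℤ_[2]) ∣ (c + d) - 1 from by
      obtain ⟨u, hu⟩ := hc; exact ⟨u + e, by linear_combination hu + he⟩)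
    exact ⟨w - e^2, by linear_combination hw - (2*(d+2*e))*he⟩
  · obtain ⟨w, hw⟩ := odd_sq (show (2:ℤ_[2]) ∣ (c - d) - 1 from by
      obtain ⟨u, hu⟩ := hc; exact ⟨u - e, by linear_combination hu - he⟩)
    exact ⟨w - e^2, by linear_combination hw - (2*(d+2*e))*he⟩

lemma descent (k : ℕ) :
    ∀ (c d a b τ : ℤ_[2]), ¬ (2:ℤ_[2]) ∣ τ → IsUnit (a^2 + b^2) →
      c^2 - d^2 = a * (2^k * τ)^2 → 2*c*d = b * (2^k * τ)^2 →
      (((8:ℤ_[2]) ∣ a - 1 + b ∧ (8:ℤ_[2]) ∣ a - 1 - b) ∨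
        ((8:ℤ_[2]) ∣ a + 1 + b ∧ (8:ℤ_[2]) ∣ a + 1 - b)) := by
  obtain ⟨h2ne, h4ne, h8ne⟩ := num_ne_zero
  induction k with
  | zero =>
    intro c d a b τ hτ hab h1 h2
    simp only [pow_zero, one_mul] at h1 h2
    have hsum : (c^2 + d^2)^2 = (a^2 + b^2) * τ^4 := by
      linear_combination (c^2 - d^2 + a*τ^2)*h1 + (2*c*d + b*τ^2)*h2
    have hunit : IsUnit (c^2 + d^2) := by
      have h : IsUnit ((c^2+d^2)^2) := by
        rw [hsum]
        exact hab.mul ((isUnit_of_odd hτ).pow 4)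
      exact (isUnit_pow_iff (n := 2) (by norm_num)).mp h
    have hodd := odd_of_isUnit hunit
    obtain ⟨w2, hw2⟩ : (8:ℤ_[2]) ∣ τ^2 - 1 := by
      apply odd_sq
      rcases par τ with h | h
      · exact absurd h hτ
      · exact h
    rcases par c with ⟨u, hu⟩ | ⟨u, hu⟩ <;> rcases par d with ⟨v, hv⟩ | ⟨v, hv⟩
    · exact absurd ⟨2*u^2 + 2*v^2, by linear_combination (c+2*u)*hu + (d+2*v)*hv⟩ hodd
    · -- c even, d odd : the -1 case
      right
      obtain ⟨w1a, hw1a⟩ := (odd_even_sq ⟨v, hv⟩ ⟨u, hu⟩).1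
      obtain ⟨w1b, hw1b⟩ := (odd_even_sq ⟨v, hv⟩ ⟨u, hu⟩).2
      constructor
      · exact ⟨-w1b - (a + b)*w2, by linear_combination -hw1b - h1 - h2 - (a+b)*hw2⟩
      · exact ⟨-w1a - (a - b)*w2, by linear_combination -hw1a - h1 + h2 - (a-b)*hw2⟩
    · -- c odd, d even : the +1 case
      left
      obtain ⟨w1a, hw1a⟩ := (odd_even_sq ⟨u, hu⟩ ⟨v, hv⟩).1
      obtain ⟨w1b, hw1b⟩ := (odd_even_sq ⟨u, hu⟩ ⟨v, hv⟩).2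
      constructor
      · exact ⟨w1a - (a + b)*w2, by linear_combination hw1a - h1 - h2 - (a+b)*hw2⟩
      · exact ⟨w1b - (a - b)*w2, by linear_combination hw1b - h1 + h2 - (a-b)*hw2⟩
    · exact absurd ⟨1 + 2*u + 2*u^2 + 2*v + 2*v^2,
        by linear_combination (c+1+2*u)*hu + (d+1+2*v)*hv⟩ hodd
  | succ k ih =>
    intro c d a b τ hτ hab h1 h2
    rcases par c with ⟨u, hu⟩ | ⟨u, hu⟩ <;> rcases par d with ⟨v, hv⟩ | ⟨v, hv⟩
    · -- both even: descend
      have h1' : u^2 - v^2 = a * (2^k * τ)^2 := by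
        apply mul_left_cancel₀ h4ne
        linear_combination h1 - (c+2*u)*hu + (d+2*v)*hv
      have h2' : 2*u*v = b * (2^k * τ)^2 := by
        apply mul_left_cancel₀ h4ne
        linear_combination h2 - 2*d*hu - 4*u*hv
      exact ih u v a b τ hτ hab h1' h2'
    · -- c even, d odd: impossible
      exfalso
      apply two_prime.not_isUnit
      refine IsUnit.of_mul_eq_one (2*(-(a * (2^k * τ)^2) - v - v^2 + u^2)) ?_
      linear_combination h1 + (d+1+2*v)*hv - (c+2*u)*hu
    · -- c odd, d even: impossible
      exfalso
      apply two_prime.not_isUnit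
      refine IsUnit.of_mul_eq_one (2*(a * (2^k * τ)^2 - u - u^2 + v^2)) ?_
      linear_combination -h1 + (c+1+2*u)*hu - (d+2*v)*hv
    · -- both odd: impossible
      exfalso
      apply two_prime.not_isUnit
      have hcd : c*d = 1 + 2*u + 2*v + 4*u*v := by
        linear_combination d*hu + (1+2*u)*hv
      have hcd2 : c*d = 2*(b*(2^k*τ)^2) := by
        apply mul_left_cancel₀ h2ne
        linear_combination h2
      exact IsUnit.of_mul_eq_one (b*(2^k*τ)^2 - u - v - 2*u*v)
        (by linear_combination hcd - hcd2)

lemma Z2i_nontrivial : (1 : Z2i) ≠ 0 := by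
  intro h
  have h' : co 1 + co 0 * Z2i.i = 0 := by simp [h]
  exact one_ne_zero (repr_unique h').1

/-- A unit `ω` of `ℤ₂[i]` is a square in `ℚ₂(i)` (the fraction field)
iff `ω ≡ ±1 (mod 𝔪⁵)`. -/
theorem unit_isSquare_in_fractionField_iff (ω : Z2iˣ) :
    IsSquare (algebraMap Z2i (FractionRing Z2i) (ω : Z2i)) ↔
      ((ω : Z2i) - 1 ∈ Z2i.m ^ 5 ∨ (ω : Z2i) + 1 ∈ Z2i.m ^ 5) := by
  obtain ⟨a, b, hab⟩ := repr_exists (ω : Z2i)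
  obtain ⟨a', b', hab'⟩ := repr_exists ((ω⁻¹ : Z2iˣ) : Z2i)
  have hone : (co a + co b * Z2i.i) * (co a' + co b' * Z2i.i) = 1 := by
    rw [← hab, ← hab', ω.mul_inv]
  rw [mul_rule] at hone
  have hone' : co (a*a' - b*b') + co (a*b' + b*a') * Z2i.i = co 1 + co 0 * Z2i.i := by
    rw [hone]; simp
  obtain ⟨hn1, hn2⟩ := repr_inj hone'
  have habU : IsUnit (a^2+b^2) :=
    IsUnit.of_mul_eq_one (a'^2+b'^2)
      (by linear_combination (a*a'-b*b'+1)*hn1 + (a*b'+b*a')*hn2)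
  have hm1 : (ω : Z2i) - 1 = co (a-1) + co b * Z2i.i := by
    rw [hab, map_sub, map_one]; ring
  have hm2 : (ω : Z2i) + 1 = co (a+1) + co b * Z2i.i := by
    rw [hab, map_add, map_one]; ring
  have hiff1 : ((ω : Z2i) - 1 ∈ Z2i.m^5) ↔
      ((8:ℤ_[2]) ∣ a - 1 + b ∧ (8:ℤ_[2]) ∣ a - 1 - b) := by
    rw [hm1]; exact mem_m5_iff _ _
  have hiff2 : ((ω : Z2i) + 1 ∈ Z2i.m^5) ↔
      ((8:ℤ_[2]) ∣ a + 1 + b ∧ (8:ℤ_[2]) ∣ a + 1 - b) := by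
    rw [hm2]; exact mem_m5_iff _ _
  rw [hiff1, hiff2]
  constructor
  · rintro ⟨r, hr⟩
    obtain ⟨⟨y, t⟩, hyt⟩ := IsLocalization.surj (nonZeroDivisors Z2i) r
    have hinj := IsFractionRing.injective Z2i (FractionRing Z2i)
    have heq : y * y = (ω : Z2i) * ((t : Z2i) * (t : Z2i)) := by
      apply hinj
      simp only [map_mul]
      rw [← hyt, hr]
      ring
    obtain ⟨e, f, ht⟩ := repr_exists (t : Z2i)
    set σt : Z2i := co e + co (-f) * Z2i.i with hσt
    set T := e^2 + f^2 with hT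
    have hconj : (t : Z2i) * σt = co T + co 0 * Z2i.i := by
      rw [ht, hσt, mul_rule]
      congr 2 <;> ring
    have hTne : T ≠ 0 := by
      intro hT0
      have hst : σt * (t : Z2i) = 0 := by
        rw [mul_comm, hconj, hT0]; simp
      have hσ0 : σt = 0 := (mem_nonZeroDivisors_iff.mp t.2).2 _ hst
      obtain ⟨he, hf⟩ := repr_unique (hσt ▸ hσ0)
      have ht0 : (t : Z2i) = 0 := by
        rw [ht, he, show f = 0 from by linear_combination -hf]
        simp
      have := (mem_nonZeroDivisors_iff.mp t.2).2 1 (by rw [ht0, mul_zero])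
      exact Z2i_nontrivial this
    obtain ⟨C, D, hY⟩ := repr_exists (y * σt)
    have hmain : (co C + co D * Z2i.i) * (co C + co D * Z2i.i)
        = (co a + co b * Z2i.i) * ((co T + co 0 * Z2i.i) * (co T + co 0 * Z2i.i)) := by
      rw [← hY, ← hconj, ← hab]
      linear_combination σt * σt * heq
    rw [mul_rule, mul_rule, mul_rule] at hmain
    obtain ⟨hc1, hc2⟩ := repr_inj hmain
    -- decompose T
    have hTspec := PadicInt.unitCoeff_spec (p := 2) hTne
    set k := (PadicInt.valuation T) with hk
    set τ : ℤ_[2] := (PadicInt.unitCoeff hTne : ℤ_[2]) with hτ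
    have hτodd : ¬ (2:ℤ_[2]) ∣ τ := odd_of_isUnit (PadicInt.unitCoeff hTne).isUnit
    have h1 : C^2 - D^2 = a * (2^k * τ)^2 := by
      have h2' : ((2:ℕ):ℤ_[2]) = (2:ℤ_[2]) := by norm_num
      rw [h2'] at hTspec
      linear_combination hc1 + (a*(T + 2^k*τ))*hTspec
    have h2 : 2*C*D = b * (2^k * τ)^2 := by
      have h2' : ((2:ℕ):ℤ_[2]) = (2:ℤ_[2]) := by norm_num
      rw [h2'] at hTspec
      linear_combination hc2 + (b*(T + 2^k*τ))*hTspec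
    exact descent k C D a b τ hτodd habU h1 h2
  · rintro (⟨h1, h2⟩ | ⟨h1, h2⟩)
    · obtain ⟨z, hz⟩ := sq_exists h1 h2
      refine ⟨algebraMap Z2i (FractionRing Z2i) z, ?_⟩
      rw [hab, ← hz, ← map_mul]
      congr 1
      ring
    · obtain ⟨z, hz⟩ := sq_exists (a := -a) (b := -b)
        ⟨-(Classical.choose h1), by
          have := Classical.choose_spec h1
          linear_combination -this⟩
        ⟨-(Classical.choose h2), by
          have := Classical.choose_spec h2
          linear_combination -this⟩
      refine ⟨algebraMap Z2i (FractionRing Z2i) (Z2i.i * z), ?_⟩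
      have hz2 : (Z2i.i * z) * (Z2i.i * z) = (ω : Z2i) := by
        have hisq := i_sq
        rw [hab]
        have : Z2i.i * z * (Z2i.i * z) = Z2i.i^2 * z^2 := by ring
        rw [this, hisq, hz]
        simp only [map_neg]
        ring
      rw [← hz2, map_mul]
end

section
/- Let K be a field of characteristic not 2, let d ∈ K be a non-square, L = K(√d), and let a, b ∈ K be such that a + b√d is not a square in L. Set M = L(√(a + b√d)). Then M/K is a cyclic extension of degree 4 if and only if a² - d b² ∈ d·(K^×)². -/
open IntermediateField Polynomial Module

section QuadHelpers

variable {F E : Type*} [Field F] [Field E] [Algebra F E] {c : F} {u : E}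

theorem quad_unique (hc : ¬ IsSquare c) (hu : u ^ 2 = algebraMap F E c)
    {p q : F} (h : algebraMap F E p + algebraMap F E q * u = 0) : p = 0 ∧ q = 0 := by
  have hinj := (algebraMap F E).injective
  by_cases hq : q = 0
  · subst hq
    simp only [map_zero, zero_mul, add_zero] at h
    exact ⟨hinj (by simpa using h), rfl⟩
  · exfalso
    apply hc
    have hqE : algebraMap F E q ≠ 0 := fun h0 => hq (hinj (by simpa using h0))
    have hu' : u = algebraMap F E (-p / q) := by
      rw [map_div₀, map_neg, eq_div_iff hqE]
      linear_combination h
    refine ⟨-p / q, hinj ?_⟩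
    rw [← hu, hu', map_mul, sq]

theorem quad_rep (hu : u ^ 2 = algebraMap F E c)
    (hgen : IntermediateField.adjoin F {u} = ⊤) (hc : ¬ IsSquare c) (x : E) :
    ∃ p q : F, x = algebraMap F E p + algebraMap F E q * u := by
  have hx : x ∈ IntermediateField.adjoin F {u} := by rw [hgen]; trivial
  induction hx using IntermediateField.adjoin_induction with
  | mem y hy =>
      rcases hy with rfl
      exact ⟨0, 1, by simp⟩
  | algebraMap y => exact ⟨y, 0, by simp⟩
  | add y z _ _ hy hz =>
      obtain ⟨p1, q1, rfl⟩ := hy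
      obtain ⟨p2, q2, rfl⟩ := hz
      exact ⟨p1 + p2, q1 + q2, by push_cast [map_add]; ring⟩
  | inv y _ hy =>
      obtain ⟨p, q, rfl⟩ := hy
      by_cases h0 : algebraMap F E p + algebraMap F E q * u = 0
      · exact ⟨0, 0, by rw [h0]; simp⟩
      · have hN : p ^ 2 - c * q ^ 2 ≠ 0 := by
          intro hN0
          by_cases hq : q = 0
          · exact h0 (by simp [hq, pow_eq_zero_iff (two_ne_zero) |>.mp
              (show p ^ 2 = 0 by simpa [hq] using hN0)])
          · refine hc ⟨p / q, ?_⟩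
            have hp2 : p ^ 2 = c * q ^ 2 := by linear_combination hN0
            field_simp
            linear_combination -hp2
        set N := p ^ 2 - c * q ^ 2 with hNdef
        have hNE : algebraMap F E N ≠ 0 :=
          fun h => hN ((algebraMap F E).injective (by simpa using h))
        refine ⟨p / N, -q / N, ?_⟩
        have hrw : algebraMap F E (p / N) + algebraMap F E (-q / N) * u =
            (algebraMap F E p - algebraMap F E q * u) / algebraMap F E N := by
          rw [map_div₀, map_div₀, map_neg]
          ring
        rw [hrw, eq_div_iff hNE, inv_mul_eq_div, div_eq_iff h0]
        simp only [hNdef, map_sub, map_mul, map_pow]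
        linear_combination ((algebraMap F E q)^2) * hu
  | mul y z _ _ hy hz =>
      obtain ⟨p1, q1, rfl⟩ := hy
      obtain ⟨p2, q2, rfl⟩ := hz
      exact ⟨p1 * p2 + c * q1 * q2, p1 * q2 + q1 * p2, by
        push_cast [map_add, map_mul]
        linear_combination (algebraMap F E q1 * algebraMap F E q2) * hu⟩

end QuadHelpers

section QuadHelpers2

variable {F E : Type*} [Field F] [Field E] [Algebra F E] {c : F} {u : E}

noncomputable def quad_basis (hc : ¬ IsSquare c) (hu : u ^ 2 = algebraMap F E c)
    (hgen : IntermediateField.adjoin F {u} = ⊤) : Basis (Fin 2) F E :=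
  Basis.mk (v := ![1, u])
    (LinearIndependent.pair_iff.mpr (fun p q h => by
      refine quad_unique hc hu (p := p) (q := q) ?_
      rw [Algebra.smul_def, Algebra.smul_def] at h
      simpa using h))
    (by
      rintro x -
      obtain ⟨p, q, rfl⟩ := quad_rep hu hgen hc x
      have : Set.range ![(1 : E), u] = {1, u} := by
        simp only [Matrix.range_cons, Matrix.range_empty, Set.union_empty,
          Set.union_singleton, Set.singleton_union]
        exact Set.pair_comm u 1
      rw [this]
      refine Submodule.mem_span_pair.mpr ⟨p, q, ?_⟩
      rw [Algebra.smul_def, Algebra.smul_def]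
      simp)

theorem quad_finrank (hc : ¬ IsSquare c) (hu : u ^ 2 = algebraMap F E c)
    (hgen : IntermediateField.adjoin F {u} = ⊤) : Module.finrank F E = 2 := by
  rw [Module.finrank_eq_card_basis (quad_basis hc hu hgen)]
  simp

theorem quad_findim (hc : ¬ IsSquare c) (hu : u ^ 2 = algebraMap F E c)
    (hgen : IntermediateField.adjoin F {u} = ⊤) : FiniteDimensional F E :=
  Module.Finite.of_basis (quad_basis hc hu hgen)

end QuadHelpers2

/-- Lemma on cyclic quartic extensions: let `K` be a field of characteristic ≠ 2,
`d ∈ K` a non-square, `L = K(√d)`, and `a, b ∈ K` with `a + b√d` not a square in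
`L`; set `M = L(√(a + b√d))`. Then `M/K` is cyclic of degree 4 iff
`a² - d·b² ∈ d·(Kˣ)²`. -/
theorem cyclic_quartic_iff (K L M : Type*) [Field K] [Field L] [Field M]
    [Algebra K L] [Algebra L M] [Algebra K M] [IsScalarTower K L M]
    (h2 : (2 : K) ≠ 0)
    (d : K) (hd : ¬ IsSquare d)
    (s : L) (hs : s ^ 2 = algebraMap K L d)
    (hLgen : IntermediateField.adjoin K {s} = ⊤)
    (a b : K)
    (hns : ¬ IsSquare (algebraMap K L a + algebraMap K L b * s))
    (t : M) (ht : t ^ 2 = algebraMap L M (algebraMap K L a + algebraMap K L b * s))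
    (hMgen : IntermediateField.adjoin L {t} = ⊤) :
    (IsGalois K M ∧ Module.finrank K M = 4 ∧ IsCyclic (M ≃ₐ[K] M)) ↔
      ∃ e : K, e ≠ 0 ∧ a ^ 2 - d * b ^ 2 = d * e ^ 2 := by
  -- notation
  have hinjKL := (algebraMap K L).injective
  have hinjLM := (algebraMap L M).injective
  have hinjKM := (algebraMap K M).injective
  have htower : ∀ x : K, algebraMap K M x = algebraMap L M (algebraMap K L x) :=
    fun x => IsScalarTower.algebraMap_apply K L M x
  set sM : M := algebraMap L M s with hsMdef
  set αL : L := algebraMap K L a + algebraMap K L b * s with hαLdef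
  have hsM : sM ^ 2 = algebraMap K M d := by
    rw [htower, hsMdef, ← map_pow, hs]
  have ht2 : t ^ 2 = algebraMap K M a + algebraMap K M b * sM := by
    rw [ht, htower, htower, hαLdef, map_add, map_mul]
  -- basic nonvanishing
  have hd0 : d ≠ 0 := fun h => hd ⟨0, by rw [h]; ring⟩
  have hαL0 : αL ≠ 0 := fun h => hns ⟨0, by rw [h]; ring⟩
  have ht0 : t ≠ 0 := fun h => hαL0 (hinjLM (by rw [map_zero, ← ht, h]; ring))
  have hsM0 : sM ≠ 0 := by
    intro h
    apply hd0
    apply hinjKM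
    rw [map_zero, ← hsM, h]; ring
  have h2M : (2 : M) ≠ 0 := by
    intro h
    apply h2
    apply hinjKM
    rw [map_ofNat, map_zero, h]
  -- representation lemmas
  have repL := quad_rep hs hLgen hd
  have uniqL := fun {p q : K} => quad_unique hd hs (p := p) (q := q)
  have repM := quad_rep ht hMgen hns
  have uniqM := fun {p q : L} => quad_unique hns ht (p := p) (q := q)
  -- finite dimensionality and rank
  have hfdKL : FiniteDimensional K L := quad_findim hd hs hLgen
  have hfdLM : FiniteDimensional L M := quad_findim hns ht hMgen
  have hfdKM : FiniteDimensional K M := FiniteDimensional.trans K L M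
  have hrank4 : Module.finrank K M = 4 := by
    rw [← Module.finrank_mul_finrank K L M, quad_finrank hd hs hLgen,
      quad_finrank hns ht hMgen]
  constructor
  · rintro ⟨hGal, -, hcyc⟩
    obtain ⟨τ, hτgen⟩ := IsCyclic.exists_generator (α := M ≃ₐ[K] M)
    have hord : orderOf τ = 4 := by
      rw [orderOf_eq_card_of_forall_mem_zpowers hτgen,
        IsGalois.card_aut_eq_finrank K M, hrank4]
    have hτK : ∀ x : K, τ (algebraMap K M x) = algebraMap K M x := fun x => τ.commutes x
    have hsq : (τ sM - sM) * (τ sM + sM) = 0 := by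
      have h' : (τ sM) ^ 2 = sM ^ 2 := by
        rw [← map_pow, hsM, hτK, ← hsM]
      linear_combination h'
    have hτ2ne : τ ^ 2 ≠ 1 := by
      intro hτ2
      have : orderOf τ ∣ 2 := orderOf_dvd_of_pow_eq_one hτ2
      rw [hord] at this
      norm_num at this
    rcases mul_eq_zero.mp hsq with h | h
    · -- τ fixes √d : impossible
      exfalso
      have hss : τ sM = sM := by linear_combination h
      have hfixL : ∀ x : L, τ (algebraMap L M x) = algebraMap L M x := by
        intro x
        obtain ⟨p, q, rfl⟩ := repL x
        rw [map_add, map_mul, ← htower, ← htower, map_add, map_mul, hτK, hτK, hss]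
      have hsqt : (τ t - t) * (τ t + t) = 0 := by
        have h' : (τ t) ^ 2 = t ^ 2 := by
          rw [← map_pow, ht, hfixL, ← ht]
        linear_combination h'
      have hττt : τ (τ t) = t := by
        rcases mul_eq_zero.mp hsqt with h' | h'
        · have h'' : τ t = t := by linear_combination h'
          rw [h'', h'']
        · have h'' : τ t = -t := by linear_combination h'
          rw [h'', map_neg, h'', neg_neg]
      apply hτ2ne
      ext m
      obtain ⟨x, y, rfl⟩ := repM m
      have : (τ ^ 2) (algebraMap L M x + algebraMap L M y * t)
          = τ (τ (algebraMap L M x + algebraMap L M y * t)) := by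
        rw [pow_two]
        simp only [AlgEquiv.mul_apply]
      rw [this]
      simp only [map_add, map_mul, hfixL, hττt, AlgEquiv.one_apply]
    · -- τ (√d) = -√d
      have hτs : τ sM = -sM := by linear_combination h
      have hτL : ∀ p q : K, τ (algebraMap K M p + algebraMap K M q * sM)
          = algebraMap K M p - algebraMap K M q * sM := by
        intro p q
        rw [map_add, map_mul, hτK, hτK, hτs]
        ring
      have hfix2L : ∀ x : L, τ (τ (algebraMap L M x)) = algebraMap L M x := by
        intro x
        obtain ⟨p, q, rfl⟩ := repL x
        rw [map_add, map_mul, ← htower, ← htower]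
        rw [hτL p q]
        have h2'' : algebraMap K M p - algebraMap K M q * sM
            = algebraMap K M p + algebraMap K M (-q) * sM := by
          rw [map_neg]; ring
        rw [h2'', hτL p (-q), map_neg]
        ring
      have hτt2 : (τ t) ^ 2 = algebraMap K M a - algebraMap K M b * sM := by
        rw [← map_pow, ht2, hτL]
      have hsqt : (τ (τ t) - t) * (τ (τ t) + t) = 0 := by
        have h' : (τ (τ t)) ^ 2 = t ^ 2 := by
          rw [← map_pow, ← map_pow, ht, hfix2L, ← ht]
        linear_combination h'
      have hτ2t : τ (τ t) = -t := by
        rcases mul_eq_zero.mp hsqt with h' | h'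
        · exfalso
          apply hτ2ne
          have h'' : τ (τ t) = t := by linear_combination h'
          ext m
          obtain ⟨x, y, rfl⟩ := repM m
          have hrw : (τ ^ 2) (algebraMap L M x + algebraMap L M y * t)
              = τ (τ (algebraMap L M x + algebraMap L M y * t)) := by
            rw [pow_two]
            simp only [AlgEquiv.mul_apply]
          rw [hrw]
          simp only [map_add, map_mul, hfix2L, h'', AlgEquiv.one_apply]
        · linear_combination h'
      -- the element w = t · τ(t)
      set w : M := t * τ t with hwdef
      have hτt0 : τ t ≠ 0 := by
        intro h'
        apply ht0
        apply τ.injective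
        rw [h', map_zero]
      have hw0 : w ≠ 0 := mul_ne_zero ht0 hτt0
      have hw2 : w ^ 2 = algebraMap K M (a ^ 2 - d * b ^ 2) := by
        rw [hwdef, map_sub, map_mul, map_pow, map_pow]
        linear_combination (τ t) ^ 2 * ht2
          + (algebraMap K M a + algebraMap K M b * sM) * hτt2 - (algebraMap K M b) ^ 2 * hsM
      have hτw : τ w = -w := by
        rw [hwdef, map_mul, hτ2t]
        ring
      have hτ2w : τ (τ w) = w := by
        rw [hτw, map_neg, hτw, neg_neg]
      -- w lies in L
      obtain ⟨x, y, hwxy⟩ := repM w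
      have hy0 : y = 0 := by
        have h1 : τ (τ w) = algebraMap L M x - algebraMap L M y * t := by
          rw [hwxy, map_add, map_mul, map_add, map_mul, hfix2L, hfix2L, hτ2t]
          ring
        rw [hτ2w, hwxy] at h1
        have h2' : algebraMap L M (2 * y) * t = 0 := by
          rw [map_mul]
          have : algebraMap L M (2 : L) = (2 : M) := by rw [map_ofNat]
          rw [this]
          linear_combination h1
        rcases mul_eq_zero.mp h2' with h' | h'
        · have := hinjLM (h'.trans (map_zero (algebraMap L M)).symm)
          have h2L : (2 : L) ≠ 0 := by
            intro hh
            apply h2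
            apply hinjKL
            rw [map_ofNat, map_zero, hh]
          rcases mul_eq_zero.mp this with h'' | h''
          · exact absurd h'' h2L
          · exact h''
        · exact absurd h' ht0
      rw [hy0, map_zero, zero_mul, add_zero] at hwxy
      -- w = (algebraMap) x with x ∈ L; write x = p + q s
      obtain ⟨p, q, hxpq⟩ := repL x
      have hwM : w = algebraMap K M p + algebraMap K M q * sM := by
        rw [hwxy, hxpq, map_add, map_mul, ← htower, ← htower]
      have hp0 : p = 0 := by
        have h1 : τ w = algebraMap K M p - algebraMap K M q * sM := by
          rw [hwM, hτL]
        rw [hτw, hwM] at h1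
        have h2' : algebraMap K M (2 * p) = 0 := by
          rw [map_mul, map_ofNat]
          linear_combination -h1
        have := hinjKM (h2'.trans (map_zero (algebraMap K M)).symm)
        rcases mul_eq_zero.mp this with h'' | h''
        · exact absurd h'' h2
        · exact h''
      rw [hp0, map_zero, zero_add] at hwM
      have hq0 : q ≠ 0 := by
        intro hq
        apply hw0
        rw [hwM, hq, map_zero, zero_mul]
      refine ⟨q, hq0, ?_⟩
      apply hinjKM
      rw [← hw2, hwM, map_mul, map_pow]
      linear_combination (algebraMap K M q) ^ 2 * hsM
  · rintro ⟨e, he, heq⟩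
    set aM : M := algebraMap K M a with haMdef
    set bM : M := algebraMap K M b with hbMdef
    set dM : M := algebraMap K M d with hdMdef
    set eM : M := algebraMap K M e with heMdef
    have heM0 : eM ≠ 0 := fun h => he (hinjKM (by rw [map_zero, ← h]))
    have hb : b ≠ 0 := by
      intro hb0
      rcases eq_or_ne a 0 with ha0 | ha0
      · exact hαL0 (by rw [hαLdef, ha0, hb0]; simp)
      · apply hd
        refine ⟨a / e, ?_⟩
        have : a ^ 2 = d * e ^ 2 := by rw [← heq, hb0]; ring
        field_simp
        linear_combination -this
    have hbM0 : bM ≠ 0 := fun h => hb (hinjKM (by rw [map_zero, ← h]))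
    have heqM : aM ^ 2 - dM * bM ^ 2 = dM * eM ^ 2 := by
      have := congrArg (algebraMap K M) heq
      rw [map_sub, map_mul, map_mul, map_pow, map_pow, map_pow] at this
      exact this
    set t' : M := sM * eM * t⁻¹ with ht'def
    have hprod : (aM - bM * sM) * (aM + bM * sM) = dM * eM ^ 2 := by
      linear_combination heqM - bM ^ 2 * hsM
    have ht'sq : t' ^ 2 = aM - bM * sM := by
      have h1 : t' ^ 2 * t ^ 2 = sM ^ 2 * eM ^ 2 := by
        rw [ht'def]
        field_simp
      have h2' : (aM - bM * sM) * t ^ 2 = sM ^ 2 * eM ^ 2 := by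
        rw [ht2]
        linear_combination hprod - eM ^ 2 * hsM
      have := h1.trans h2'.symm
      exact mul_right_cancel₀ (pow_ne_zero 2 ht0) this
    -- M is generated by t over K
    have hKt : IntermediateField.adjoin K {t} = ⊤ := by
      rw [eq_top_iff]
      rintro m -
      set T := IntermediateField.adjoin K {t} with hTdef
      have htm : t ∈ T := IntermediateField.subset_adjoin K {t} rfl
      have hsmem : sM ∈ T := by
        have hval : sM = (t ^ 2 - aM) / bM := by
          rw [ht2]
          field_simp
          try ring
        rw [hval]
        exact div_mem (sub_mem (pow_mem htm 2) (T.algebraMap_mem a))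
          (T.algebraMap_mem b)
      have hLmem : ∀ x : L, algebraMap L M x ∈ T := by
        intro x
        obtain ⟨p, q, rfl⟩ := repL x
        rw [map_add, map_mul, ← htower, ← htower]
        exact add_mem (T.algebraMap_mem p) (mul_mem (T.algebraMap_mem q) hsmem)
      obtain ⟨x, y, rfl⟩ := repM m
      exact add_mem (hLmem x) (mul_mem (hLmem y) htm)
    have hint : IsIntegral K t := IsIntegral.of_finite K t
    -- the quartic polynomial
    set P : Polynomial K :=
      Polynomial.X ^ 4 + Polynomial.C (-(2 * a)) * Polynomial.X ^ 2
        + Polynomial.C (a ^ 2 - d * b ^ 2) with hPdef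
    have hPmonic : P.Monic := by
      rw [hPdef]
      monicity!
    have hPdeg : P.natDegree = 4 := by
      rw [hPdef]
      compute_degree!
    have hroot : ∀ u : M, u ^ 2 = aM + bM * sM ∨ u ^ 2 = aM - bM * sM →
        Polynomial.aeval u P = 0 := by
      rintro u hu
      rw [hPdef]
      simp only [map_add, map_mul, map_pow, map_neg, Polynomial.aeval_X, Polynomial.aeval_C]
      rw [map_sub, map_mul, map_pow, map_pow, map_ofNat]
      rcases hu with hu | hu
      · linear_combination (u ^ 2 + aM + bM * sM - 2 * aM) * hu + bM ^ 2 * hsM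
      · linear_combination (u ^ 2 + aM - bM * sM - 2 * aM) * hu + bM ^ 2 * hsM
    have hProott : Polynomial.aeval t P = 0 := hroot t (Or.inl ht2)
    have hProott' : Polynomial.aeval t' P = 0 := hroot t' (Or.inr ht'sq)
    -- minimal polynomial of t is P
    have hmindeg : (minpoly K t).natDegree = 4 := by
      rw [← IntermediateField.adjoin.finrank hint, hKt, IntermediateField.finrank_top', hrank4]
    have hmin : minpoly K t = P := by
      obtain ⟨Q, hQ⟩ := minpoly.dvd K t hProott
      have hQmonic : Q.Monic := ((minpoly.monic hint).of_mul_monic_left (hQ ▸ hPmonic))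
      have hQdeg : Q.natDegree = 0 := by
        have := congrArg Polynomial.natDegree hQ
        rw [Polynomial.natDegree_mul (minpoly.ne_zero hint) hQmonic.ne_zero, hPdeg,
          hmindeg] at this
        omega
      rw [hQ, Polynomial.Monic.natDegree_eq_zero hQmonic |>.mp hQdeg, mul_one]
    -- construct the automorphism τ with τ t = t'
    have hminroot : Polynomial.aeval t' (minpoly K t) = 0 := by rw [hmin]; exact hProott'
    set eqv : IntermediateField.adjoin K {t} ≃ₐ[K] M :=
      (IntermediateField.equivOfEq hKt).trans IntermediateField.topEquiv with heqvdef
    set pb : PowerBasis K M := (IntermediateField.adjoin.powerBasis hint).map eqv with hpbdef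
    have hgen : pb.gen = t := by
      rw [hpbdef]
      simp [IntermediateField.adjoin.powerBasis_gen, heqvdef]
    have hminpb : Polynomial.aeval t' (minpoly K pb.gen) = 0 := by rw [hgen]; exact hminroot
    set τ0 : M →ₐ[K] M := pb.lift t' hminpb with hτ0def
    have hτ0t : τ0 t = t' := by rw [← hgen, hτ0def]; exact pb.lift_gen t' hminpb
    have hbij : Function.Bijective τ0 := by
      refine ⟨τ0.toRingHom.injective, ?_⟩
      exact (LinearMap.injective_iff_surjective (f := τ0.toLinearMap)).mp
        τ0.toRingHom.injective
    set τ : M ≃ₐ[K] M := AlgEquiv.ofBijective τ0 hbij with hτdef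
    have hτapp : ∀ x : M, τ x = τ0 x := fun x => rfl
    have hτt : τ t = t' := by rw [hτapp, hτ0t]
    have hτK : ∀ x : K, τ (algebraMap K M x) = algebraMap K M x := fun x => τ.commutes x
    have hτs : τ sM = -sM := by
      have hval : sM = (t ^ 2 - aM) / bM := by
        rw [ht2]; field_simp; try ring
      rw [hval, map_div₀, map_sub, map_pow, hτt, ht'sq, haMdef, hτK, hbMdef, hτK,
        ← haMdef, ← hbMdef]
      field_simp
      rw [hval]
      field_simp
      ring
    have hτt' : τ t' = -t := by
      have ht'0 : t' ≠ 0 := by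
        rw [ht'def]
        exact mul_ne_zero (mul_ne_zero hsM0 heM0) (inv_ne_zero ht0)
      rw [ht'def, map_mul, map_mul, map_inv₀, hτs, heMdef, hτK, hτt, ← heMdef, ht'def]
      field_simp
    have hτ2t : τ (τ t) = -t := by rw [hτt, hτt']
    -- order of τ is 4
    have hτLfix4 : ∀ x : L, τ (τ (τ (τ (algebraMap L M x)))) = algebraMap L M x := by
      intro x
      obtain ⟨p, q, rfl⟩ := repL x
      have hτLform : ∀ y : M, τ (τ y) = y → True := fun _ _ => trivial
      rw [map_add, map_mul, ← htower, ← htower, ← hsMdef]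
      simp only [map_add, map_mul, hτK, hτs, map_neg, neg_neg]
    have hpow4 : ∀ x : M, τ (τ (τ (τ x))) = x := by
      intro m
      obtain ⟨x, y, rfl⟩ := repM m
      have h4t : τ (τ (τ (τ t))) = t := by
        rw [hτt, hτt']
        simp only [map_neg, hτt, hτt', neg_neg]
      simp only [map_add, map_mul, hτLfix4, h4t]
    have hτ4 : τ ^ 4 = 1 := by
      ext m
      have : (τ ^ 4) m = τ (τ (τ (τ m))) := by
        rw [show (4 : ℕ) = 3 + 1 by rfl, pow_succ, pow_succ, pow_succ, pow_one]
        simp only [AlgEquiv.mul_apply]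
      rw [this, hpow4]
      simp
    have hτ2ne : τ ^ 2 ≠ 1 := by
      intro h
      have h2'' : τ (τ t) = t := by
        have := congrArg (fun f : M ≃ₐ[K] M => f t) h
        simpa [pow_two] using this
      rw [hτ2t] at h2''
      have h2t : (2 : M) * t = 0 := by linear_combination -h2''
      rcases mul_eq_zero.mp h2t with h' | h'
      · exact h2M h'
      · exact ht0 h'
    have hord : orderOf τ = 4 := by
      have hdvd : orderOf τ ∣ 4 := orderOf_dvd_of_pow_eq_one hτ4
      have hne2 : ¬ orderOf τ ∣ 2 := fun h => hτ2ne (orderOf_dvd_iff_pow_eq_one.mp h)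
      have hle : orderOf τ ≤ 4 := Nat.le_of_dvd (by norm_num) hdvd
      have hpos : 0 < orderOf τ := orderOf_pos τ
      interval_cases h : orderOf τ
      all_goals revert hdvd hne2
      all_goals decide
    -- cardinality of the automorphism group
    have hcard_le : Fintype.card (M ≃ₐ[K] M) ≤ 4 := by
      calc Fintype.card (M ≃ₐ[K] M) ≤ Fintype.card (M →ₐ[K] M) :=
              Fintype.card_le_of_injective _ AlgEquiv.coe_algHom_injective
        _ ≤ Module.finrank M (M →ₗ[K] M) := finrank_algHom K M
        _ = Module.finrank K M := Module.finrank_linearMap_self K M M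
        _ = 4 := hrank4
    have hge : orderOf τ ≤ Fintype.card (M ≃ₐ[K] M) := orderOf_le_card_univ
    have hcard : Fintype.card (M ≃ₐ[K] M) = 4 := by
      rw [hord] at hge
      exact le_antisymm hcard_le hge
    have hGal : IsGalois K M := IsGalois.of_card_aut_eq_finrank K M (by rw [Nat.card_eq_fintype_card, hcard, hrank4])
    exact ⟨hGal, hrank4, isCyclic_of_orderOf_eq_card τ (by rw [hord, Nat.card_eq_fintype_card, hcard])⟩
end
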